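/- For every n ≥ 1, the Narayana polynomial ∑_{k=0}^{n-1} (1/n)·binom(n,k)·binom(n,k+1)·z^k has only real and negative zeros. -/

import Mathlib

open Polynomial Finset


noncomputable def Bas (j k : ℕ) : ℝ[X] := (X - 1) ^ k * (X + 1) ^ (j - k)
def co (n j k : ℕ) : ℕ := Nat.factorial j * (n.choose k * n.choose (n - j + k))
noncomputable def Tn (n j : ℕ) : ℝ[X] :=
  ∑ k ∈ Finset.range (j + 1), C ((co n j k : ℕ) : ℝ) * Bas j k

lemma aux_pow (p : ℝ[X]) (m : ℕ) : C (m : ℝ) * p ^ (m - 1) * p = C (m : ℝ) * p ^ m := by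
  cases m with
  | zero => simp
  | succ m => rw [Nat.add_sub_cancel, pow_succ]; ring

lemma deriv_basis (j k : ℕ) (hk : k ≤ j) :
    (X ^ 2 - 1 : ℝ[X]) * derivative (Bas j k) =
      C (k : ℝ) * Bas (j + 1) k + C ((j - k : ℕ) : ℝ) * Bas (j + 1) (k + 1) := by
  have h1 : derivative (X - 1 : ℝ[X]) = 1 := by simp
  have h2 : derivative (X + 1 : ℝ[X]) = 1 := by simp
  have e1 : j + 1 - k = (j - k) + 1 := by omega
  have e2 : j + 1 - (k + 1) = j - k := by omega
  unfold Bas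
  rw [derivative_mul, derivative_pow, derivative_pow, h1, h2, e1, e2]
  linear_combination ((X + 1 : ℝ[X]) ^ (j - k + 1)) * aux_pow (X - 1) k +
    ((X - 1 : ℝ[X]) ^ (k + 1)) * aux_pow (X + 1) (j - k)

lemma two_X (j k : ℕ) (hk : k ≤ j) :
    (2 * X : ℝ[X]) * Bas j k = Bas (j + 1) k + Bas (j + 1) (k + 1) := by
  unfold Bas
  rw [show j + 1 - k = (j - k) + 1 from by omega, show j + 1 - (k + 1) = j - k from by omega]
  ring




lemma N1 (n j k : ℕ) (hj : j < n) (hk : k ≤ j) :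
    (n - j + (k + 1)) * co n j (k + 1) + (n - k) * co n j k = co n (j + 1) (k + 1) := by
  obtain ⟨d, rfl⟩ : ∃ d, j = k + d := ⟨j - k, by omega⟩
  obtain ⟨m, rfl⟩ : ∃ m, n = k + d + 1 + m := ⟨n - (k + d + 1), by omega⟩
  unfold co
  rw [show k + d + 1 + m - (k + d) = m + 1 from by omega,
      show k + d + 1 + m - (k + d + 1) = m from by omega,
      show m + 1 + (k + 1) = m + k + 2 from by omega,
      show m + 1 + k = m + k + 1 from by omega,
      show m + (k + 1) = m + k + 1 from by omega,
      show k + d + 1 + m - k = d + 1 + m from by omega,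
      show k + d + 1 = (k + d) + 1 from rfl,
      Nat.factorial_succ]
  have h1 : (k+d+1+m).choose (m+k+2) * (m+k+2) = (k+d+1+m).choose (m+k+1) * d := by
    have := Nat.choose_succ_right_eq (k+d+1+m) (m+k+1)
    rwa [show k + d + 1 + m - (m + k + 1) = d from by omega,
         show m + k + 1 + 1 = m + k + 2 from by omega] at this
  have h2 : (k+d+1+m).choose (k+1) * (k+1) = (k+d+1+m).choose k * (d+1+m) := by
    have := Nat.choose_succ_right_eq (k+d+1+m) k
    rwa [show k + d + 1 + m - k = d + 1 + m from by omega] at this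
  set F := Nat.factorial (k+d)
  set P := (k+d+1+m).choose k
  set Q := (k+d+1+m).choose (k+1)
  set R := (k+d+1+m).choose (m+k+1)
  set S := (k+d+1+m).choose (m+k+2)
  calc (m+k+2) * (F * (Q * S)) + (d+1+m) * (F * (P * R))
      = F * Q * (S * (m+k+2)) + F * R * (P * (d+1+m)) := by ring
    _ = F * Q * (R * d) + F * R * (Q * (k+1)) := by rw [h1, ← h2]
    _ = (k + d + 1) * F * (Q * R) := by ring

lemma N2 (n j : ℕ) (hj : j < n) : (n - j + 0) * co n j 0 = co n (j + 1) 0 := by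
  obtain ⟨m, rfl⟩ : ∃ m, n = j + 1 + m := ⟨n - (j + 1), by omega⟩
  unfold co
  rw [show j + 1 + m - j = m + 1 from by omega, show j + 1 + m - (j + 1) = m from by omega,
      Nat.factorial_succ, show m + 1 + 0 = m + 1 from rfl, show m + 0 = m from rfl]
  have h1 : (j+1+m).choose (m+1) * (m+1) = (j+1+m).choose m * (j+1) := by
    have := Nat.choose_succ_right_eq (j+1+m) m
    rwa [show j + 1 + m - m = j + 1 from by omega] at this
  set F := Nat.factorial j
  set A := (j+1+m).choose (m+1)
  set B := (j+1+m).choose m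
  calc (m + 1) * (F * ((j+1+m).choose 0 * A))
      = F * (j+1+m).choose 0 * (A * (m+1)) := by ring
    _ = F * (j+1+m).choose 0 * (B * (j+1)) := by rw [h1]
    _ = (j + 1) * F * ((j+1+m).choose 0 * B) := by ring

lemma co_top (n j : ℕ) (hj : j < n) : co n j (j + 1) = 0 := by
  unfold co
  rw [show n - j + (j + 1) = n + 1 from by omega, Nat.choose_succ_self, mul_zero, mul_zero]

lemma Tstep (n j : ℕ) (hj : j < n) :
    C ((n - j : ℕ) : ℝ) * (2 * X) * Tn n j + (X ^ 2 - 1) * derivative (Tn n j) = Tn n (j + 1) := by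
  unfold Tn
  rw [derivative_sum, Finset.mul_sum, Finset.mul_sum, ← Finset.sum_add_distrib]
  have step : ∀ k ∈ Finset.range (j + 1),
      C ((n - j : ℕ) : ℝ) * (2 * X) * (C ((co n j k : ℕ) : ℝ) * Bas j k)
        + (X ^ 2 - 1) * derivative (C ((co n j k : ℕ) : ℝ) * Bas j k)
      = C (((n - j + k) * co n j k : ℕ) : ℝ) * Bas (j + 1) k
        + C (((n - k) * co n j k : ℕ) : ℝ) * Bas (j + 1) (k + 1) := by
    intro k hk
    rw [Finset.mem_range] at hk
    have hk' : k ≤ j := by omega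
    have hc1 : (((n - j + k) * co n j k : ℕ) : ℝ) = (((n - j : ℕ) : ℝ) + (k : ℝ)) * (co n j k : ℝ) := by
      push_cast; ring
    have hc2 : (((n - k) * co n j k : ℕ) : ℝ) = (((n - j : ℕ) : ℝ) + ((j - k : ℕ) : ℝ)) * (co n j k : ℝ) := by
      rw [show (n - k) = (n - j) + (j - k) from by omega]; push_cast; ring
    rw [derivative_C_mul, hc1, hc2, C_mul, C_mul, C_add, C_add]
    have h2x := two_X j k hk'
    have hdb := deriv_basis j k hk'
    calc C (((n-j:ℕ)):ℝ) * (2 * X) * (C ((co n j k : ℕ):ℝ) * Bas j k)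
          + (X^2 - 1) * (C ((co n j k : ℕ):ℝ) * derivative (Bas j k))
        = C ((co n j k : ℕ):ℝ) * (C (((n-j:ℕ)):ℝ) * ((2*X) * Bas j k))
          + C ((co n j k : ℕ):ℝ) * ((X^2-1) * derivative (Bas j k)) := by ring
      _ = C ((co n j k : ℕ):ℝ) * (C (((n-j:ℕ)):ℝ) * (Bas (j+1) k + Bas (j+1) (k+1)))
          + C ((co n j k : ℕ):ℝ) * (C (k:ℝ) * Bas (j+1) k + C ((j-k:ℕ):ℝ) * Bas (j+1) (k+1)) := by
            rw [h2x, hdb]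
      _ = (C (((n-j:ℕ)):ℝ) + C (k:ℝ)) * C ((co n j k : ℕ):ℝ) * Bas (j+1) k
          + (C (((n-j:ℕ)):ℝ) + C ((j-k:ℕ):ℝ)) * C ((co n j k : ℕ):ℝ) * Bas (j+1) (k+1) := by ring
  rw [Finset.sum_congr rfl step, Finset.sum_add_distrib]
  -- extend first sum to range (j+2)
  have ext : ∑ k ∈ Finset.range (j + 1), C (((n - j + k) * co n j k : ℕ) : ℝ) * Bas (j + 1) k
      = ∑ k ∈ Finset.range (j + 2), C (((n - j + k) * co n j k : ℕ) : ℝ) * Bas (j + 1) k := by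
    rw [Finset.sum_range_succ (fun k => C (((n - j + k) * co n j k : ℕ) : ℝ) * Bas (j + 1) k) (j + 1),
        co_top n j hj]
    simp
  rw [ext, Finset.sum_range_succ' (fun k => C (((n - j + k) * co n j k : ℕ) : ℝ) * Bas (j + 1) k) (j + 1),
      Finset.sum_range_succ' (fun k => C ((co n (j + 1) k : ℕ) : ℝ) * Bas (j + 1) k) (j + 1)]
  rw [add_right_comm, ← Finset.sum_add_distrib]
  congr 1
  · refine Finset.sum_congr rfl ?_
    intro k hk
    rw [Finset.mem_range] at hk
    have : co n (j + 1) (k + 1) = (n - j + (k + 1)) * co n j (k + 1) + (n - k) * co n j k :=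
      (N1 n j k hj (by omega)).symm
    rw [this]
    simp only [Nat.cast_add, Nat.cast_mul, C_add, C_mul]
    ring
  · rw [← N2 n j hj]




lemma Tmain (n : ℕ) : ∀ j, j ≤ n →
    derivative^[j] ((X ^ 2 - 1 : ℝ[X]) ^ n) = (X ^ 2 - 1) ^ (n - j) * Tn n j := by
  intro j
  induction j with
  | zero =>
      intro _
      simp only [Function.iterate_zero_apply, Nat.sub_zero, Tn, co, Bas]
      rw [Finset.sum_range_one]
      simp [Nat.choose_self]
  | succ j ih =>
      intro hj
      have hjn : j < n := by omega
      rw [Function.iterate_succ_apply', ih (by omega), derivative_mul, derivative_pow]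
      have dd : derivative (X ^ 2 - 1 : ℝ[X]) = 2 * X := by
        simp [derivative_X_pow, map_ofNat, one_add_one_eq_two]
      rw [dd]
      rw [show n - j - 1 = n - (j + 1) from by omega,
          show (X ^ 2 - 1 : ℝ[X]) ^ (n - j) = (X ^ 2 - 1) ^ (n - (j + 1)) * (X ^ 2 - 1) from by
            rw [← pow_succ]; congr 1; omega]
      linear_combination ((X ^ 2 - 1 : ℝ[X]) ^ (n - (j + 1))) * Tstep n j hjn

lemma cardF (n : ℕ) : Multiset.card ((X ^ 2 - 1 : ℝ[X]) ^ n).roots = 2 * n := by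
  have e : (X ^ 2 - 1 : ℝ[X]) = (X - C 1) * (X - C (-1)) := by
    simp only [map_one, map_neg]
    ring
  have h1 : (X - C (1 : ℝ)) ≠ 0 := X_sub_C_ne_zero 1
  have h2 : (X - C (-1 : ℝ)) ≠ 0 := X_sub_C_ne_zero (-1)
  rw [e, roots_pow, roots_mul (mul_ne_zero h1 h2), roots_X_sub_C, roots_X_sub_C]
  simp [mul_comm]

lemma cardIter (n j : ℕ) :
    Multiset.card ((X ^ 2 - 1 : ℝ[X]) ^ n).roots ≤
      Multiset.card (derivative^[j] ((X ^ 2 - 1 : ℝ[X]) ^ n)).roots + j := by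
  induction j with
  | zero => simp
  | succ j ih =>
      refine ih.trans ?_
      rw [Function.iterate_succ_apply']
      have := card_roots_le_derivative (derivative^[j] ((X ^ 2 - 1 : ℝ[X]) ^ n))
      omega

lemma splitsT (n : ℕ) (hn : 1 ≤ n) : Splits (Tn n (n - 1)) ∧ Tn n (n - 1) ≠ 0 := by
  set G := derivative^[n - 1] ((X ^ 2 - 1 : ℝ[X]) ^ n) with hG
  have hGe : G = (X ^ 2 - 1) ^ (n - (n - 1)) * Tn n (n - 1) := Tmain n (n - 1) (by omega)
  have hcard : n + 1 ≤ Multiset.card G.roots := by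
    have := cardIter n (n - 1)
    rw [cardF, ← hG] at this
    omega
  have hdeg : G.natDegree ≤ n + 1 := by
    have h := natDegree_iterate_derivative ((X ^ 2 - 1 : ℝ[X]) ^ n) (n - 1)
    have hd : ((X ^ 2 - 1 : ℝ[X]) ^ n).natDegree = 2 * n := by
      have e : (X ^ 2 - 1 : ℝ[X]) = X ^ 2 - C 1 := by rw [map_one]
      rw [natDegree_pow, e, natDegree_X_pow_sub_C]
      ring
    rw [hd, ← hG] at h
    omega
  have hsplits : Splits G := by
    rw [splits_iff_card_roots]
    have := card_roots' G
    omega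
  have hG0 : G ≠ 0 := by
    intro h
    rw [h, roots_zero] at hcard
    simp at hcard
  constructor
  · exact Splits.of_dvd hsplits hG0 ⟨(X ^ 2 - 1) ^ (n - (n - 1)), by rw [hGe]; ring⟩
  · intro h
    rw [hGe, h, mul_zero] at hG0
    exact hG0 rfl




theorem stmt8 (n : ℕ) (hn : 1 ≤ n) :
    ∀ z : ℂ,
      ((∑ k ∈ Finset.range n,
          Polynomial.C ((1 / n : ℝ) * (Nat.choose n k : ℝ) * (Nat.choose n (k + 1) : ℝ)) *
            Polynomial.X ^ k).map (algebraMap ℝ ℂ)).eval z = 0 →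
      ∃ x : ℝ, x < 0 ∧ z = (x : ℂ) := by
  intro z hz
  have hn0 : (n : ℂ) ≠ 0 := Nat.cast_ne_zero.mpr (by omega)
  -- extract the clean complex sum
  have hs : ∑ k ∈ Finset.range n, (n.choose k : ℂ) * (n.choose (k + 1) : ℂ) * z ^ k = 0 := by
    rw [Polynomial.map_sum] at hz
    simp only [Polynomial.map_mul, Polynomial.map_pow, map_C, map_X, eval_finset_sum,
      eval_mul, eval_pow, eval_C, eval_X, Complex.coe_algebraMap] at hz
    have : ∑ k ∈ Finset.range n, (n.choose k : ℂ) * (n.choose (k + 1) : ℂ) * z ^ k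
        = (n : ℂ) * ∑ k ∈ Finset.range n,
            (((1 / n : ℝ) * (n.choose k : ℝ) * (n.choose (k + 1) : ℝ) : ℝ) : ℂ) * z ^ k := by
      rw [Finset.mul_sum]
      refine Finset.sum_congr rfl fun k _ => ?_
      push_cast
      field_simp
    rw [this, hz, mul_zero]
  -- z ≠ 1
  have hz1 : z ≠ 1 := by
    intro h
    rw [h] at hs
    simp only [one_pow, mul_one] at hs
    have : ∑ k ∈ Finset.range n, ((n.choose k * n.choose (k + 1) : ℕ) : ℂ) = 0 := by
      rw [← hs]; refine Finset.sum_congr rfl fun k _ => by push_cast; ring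
    rw [← Nat.cast_sum, Nat.cast_eq_zero] at this
    rw [Finset.sum_eq_zero_iff] at this
    have h0 := this 0 (Finset.mem_range.mpr (by omega))
    simp [Nat.choose_one_right] at h0
    omega
  have h1z : (1 : ℂ) - z ≠ 0 := fun h => hz1 (by linear_combination -h)
  set x : ℂ := (1 + z) / (1 - z) with hx
  have key : (1 - z) * x = 1 + z := by
    rw [hx]; field_simp
  -- evaluate Tn at x
  obtain ⟨hsplit, hT0⟩ := splitsT n hn
  have hrange : n - 1 + 1 = n := by omega
  have hTx : eval x ((Tn n (n - 1)).map (algebraMap ℝ ℂ)) = 0 := by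
    have expand : eval x ((Tn n (n - 1)).map (algebraMap ℝ ℂ))
        = ∑ k ∈ Finset.range n, ((co n (n - 1) k : ℕ) : ℂ) * ((x - 1) ^ k * (x + 1) ^ (n - 1 - k)) := by
      unfold Tn Bas
      rw [Polynomial.map_sum, eval_finset_sum, hrange]
      refine Finset.sum_congr rfl fun k _ => ?_
      simp [Complex.coe_algebraMap]
    have per : ∀ k ∈ Finset.range n,
        (1 - z) ^ (n - 1) * ((x - 1) ^ k * (x + 1) ^ (n - 1 - k)) = (2 * z) ^ k * 2 ^ (n - 1 - k) := by
      intro k hk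
      rw [Finset.mem_range] at hk
      have e : (1 - z) ^ (n - 1) = (1 - z) ^ k * (1 - z) ^ (n - 1 - k) := by
        rw [← pow_add]; congr 1; omega
      have h1 : (1 - z) * (x - 1) = 2 * z := by linear_combination key
      have h2 : (1 - z) * (x + 1) = 2 := by linear_combination key
      calc (1 - z) ^ (n - 1) * ((x - 1) ^ k * (x + 1) ^ (n - 1 - k))
          = ((1 - z) * (x - 1)) ^ k * ((1 - z) * (x + 1)) ^ (n - 1 - k) := by
            rw [e, mul_pow, mul_pow]; ring
        _ = (2 * z) ^ k * 2 ^ (n - 1 - k) := by rw [h1, h2]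
    have main : (1 - z) ^ (n - 1) * eval x ((Tn n (n - 1)).map (algebraMap ℝ ℂ)) = 0 := by
      rw [expand, Finset.mul_sum]
      have : ∀ k ∈ Finset.range n,
          (1 - z) ^ (n - 1) * (((co n (n - 1) k : ℕ) : ℂ) * ((x - 1) ^ k * (x + 1) ^ (n - 1 - k)))
          = ((Nat.factorial (n - 1) : ℂ) * 2 ^ (n - 1)) *
              ((n.choose k : ℂ) * (n.choose (k + 1) : ℂ) * z ^ k) := by
        intro k hk
        rw [Finset.mem_range] at hk
        have hco : co n (n - 1) k = Nat.factorial (n - 1) * (n.choose k * n.choose (k + 1)) := by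
          unfold co
          rw [show n - (n - 1) + k = k + 1 from by omega]
        have h2p : (2 : ℂ) ^ k * 2 ^ (n - 1 - k) = 2 ^ (n - 1) := by
          rw [← pow_add]; congr 1; omega
        have hper := per k (Finset.mem_range.mpr hk)
        calc (1 - z) ^ (n - 1) * (((co n (n - 1) k : ℕ) : ℂ) * ((x - 1) ^ k * (x + 1) ^ (n - 1 - k)))
            = ((co n (n - 1) k : ℕ) : ℂ) * ((1 - z) ^ (n - 1) * ((x - 1) ^ k * (x + 1) ^ (n - 1 - k))) := by
              ring
          _ = ((co n (n - 1) k : ℕ) : ℂ) * ((2 * z) ^ k * 2 ^ (n - 1 - k)) := by rw [hper]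
          _ = ((Nat.factorial (n - 1) : ℂ) * 2 ^ (n - 1)) *
              ((n.choose k : ℂ) * (n.choose (k + 1) : ℂ) * z ^ k) := by
              rw [hco, ← h2p]; push_cast; ring
      rw [Finset.sum_congr rfl this, ← Finset.mul_sum, hs, mul_zero]
    have hpow : (1 - z) ^ (n - 1) ≠ 0 := pow_ne_zero _ h1z
    exact (mul_eq_zero.mp main).resolve_left hpow
  -- x is a real root
  have hmapne : (Tn n (n - 1)).map (algebraMap ℝ ℂ) ≠ 0 :=
    (Polynomial.map_ne_zero_iff (algebraMap ℝ ℂ).injective).mpr hT0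
  have hxmem : x ∈ ((Tn n (n - 1)).map (algebraMap ℝ ℂ)).roots := by
    rw [mem_roots hmapne]
    exact hTx
  rw [hsplit.roots_map _, Multiset.mem_map] at hxmem
  obtain ⟨x₀, _, hx₀⟩ := hxmem
  -- x₀ ≠ -1, recover z real
  have hxne : x₀ ≠ -1 := by
    intro h
    rw [h] at hx₀
    have : ((-1 : ℝ) : ℂ) = x := hx₀
    have hbad : (1 - z) * (-1) = 1 + z := by rw [← this] at key; exact_mod_cast key
    have : (2 : ℂ) = 0 := by linear_combination -hbad
    norm_num at this
  have hden : ((x₀ + 1 : ℝ) : ℂ) ≠ 0 := by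
    rw [Complex.ofReal_ne_zero]
    intro h; exact hxne (by linarith)
  set r : ℝ := (x₀ - 1) / (x₀ + 1) with hr
  have hzr : z = (r : ℂ) := by
    have hxc : (x₀ : ℂ) = x := hx₀
    have hzx : z * ((x₀ : ℂ) + 1) = (x₀ : ℂ) - 1 := by
      rw [hxc]; linear_combination -key
    rw [hr]
    push_cast
    rw [eq_div_iff (by exact_mod_cast hden)]
    linear_combination hzx
  -- real sum is zero
  have hreal : ∑ k ∈ Finset.range n, ((n.choose k : ℝ) * (n.choose (k + 1) : ℝ)) * r ^ k = 0 := by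
    have h2 : ((∑ k ∈ Finset.range n, ((n.choose k : ℝ) * (n.choose (k + 1) : ℝ)) * r ^ k : ℝ) : ℂ) = 0 := by
      rw [← hs, hzr]
      push_cast
      exact Finset.sum_congr rfl fun k _ => by ring
    exact_mod_cast h2
  -- r < 0
  have hrneg : r < 0 := by
    by_contra hge
    push_neg at hge
    have hpos : 0 < ∑ k ∈ Finset.range n, ((n.choose k : ℝ) * (n.choose (k + 1) : ℝ)) * r ^ k := by
      refine Finset.sum_pos' (fun k _ => ?_) ⟨0, Finset.mem_range.mpr (by omega), ?_⟩
      · positivity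
      · simp [Nat.choose_one_right]
        positivity
    linarith [hreal]
  exact ⟨r, hrneg, hzr⟩
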